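/- Suppose the linear difference equation x_{m+1} = A_m x_m admits a nonuniform (μ,ν)-dichotomy with constants a < 0 ≤ b, ε ≥ 0, D ≥ 1, that the perturbations f_m satisfy f_m(0) = 0 and ‖f_m(u) − f_m(v)‖ ≤ c‖u − v‖(‖u‖ + ‖v‖)^q for some c > 0, q > 1, and that Σ_{k=1}^∞ μ_k^{aq} ν_k^ε converges; define β_m = μ_{m−1}^a / (ν_{m−1}^{ε(1+1/q)} (Σ_{k=m}^∞ μ_k^{aq} ν_k^ε)^{1/q}) and β̃_m = β_m ν_{m−1}^{−ε}, and assume there is K ≥ 1 with (μ_m^a β_m^{−1})/(μ_{n−1}^a β_n^{−1}) ≤ K for all m ≥ n ≥ 1. Fix C > D, let δ > 0 be sufficiently small, let φ ∈ 𝒳*_{δ,β}, and for each n ≥ 1 let x^φ_{n,·} ∈ ℬ_{n,δ,β} be the unique solution of x_m(ξ) = 𝒜_{m,n}ξ + Σ_{k=n}^{m−1} 𝒜_{m,k+1} P_{k+1} f_k(x_k(ξ) + φ_k(x_k(ξ))). If for every n ≥ 1 and every ξ ∈ B_n(δβ_n) one has φ_n(ξ) = −Σ_{k=n}^∞ 𝒜_{k+1,n}^{−1}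 Q_{k+1} f_k(x^φ_{n,k}(ξ) + φ_k(x^φ_{n,k}(ξ))), then for every n ≥ 1, every m ≥ n and every ξ ∈ B_n(δβ̃_n/(CK)) the identity φ_m(x^φ_{n,m}(ξ)) = 𝒜_{m,n} φ_n(ξ) + Σ_{k=n}^{m−1} 𝒜_{m,k+1} Q_{k+1} f_k(x^φ_{n,k}(ξ) + φ_k(x^φ_{n,k}(ξ))) holds. -/

import Mathlib

open Real Filter Finset

/-- A growth rate: an increasing sequence with `μ 0 ≥ 1` and `μ n → ∞`. -/
structure GrowthRate (μ : ℕ → ℝ) : Prop where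
  mono : StrictMono μ
  one_le : 1 ≤ μ 0
  tendsto_atTop : Filter.Tendsto μ Filter.atTop Filter.atTop

/-- `calA A m n = A (m-1) ∘ ⋯ ∘ A n` (identity when `m ≤ n`). -/
def calA {X : Type*} [NormedAddCommGroup X] [NormedSpace ℝ X]
    (A : ℕ → X ≃L[ℝ] X) (m n : ℕ) : X →L[ℝ] X :=
  (List.range (m - n)).foldl
    (fun B k => ((A (n + k) : X →L[ℝ] X)).comp B) (ContinuousLinearMap.id ℝ X)

/-- `calAinv A m n = (calA A m n)⁻¹ = A n⁻¹ ∘ ⋯ ∘ A (m-1)⁻¹`. -/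
def calAinv {X : Type*} [NormedAddCommGroup X] [NormedSpace ℝ X]
    (A : ℕ → X ≃L[ℝ] X) (m n : ℕ) : X →L[ℝ] X :=
  (List.range (m - n)).foldl
    (fun B k => B.comp ((A (n + k)).symm : X →L[ℝ] X)) (ContinuousLinearMap.id ℝ X)

/-- The complementary projection `Q m = Id - P m`. -/
def Qproj {X : Type*} [NormedAddCommGroup X] [NormedSpace ℝ X]
    (P : ℕ → X →L[ℝ] X) (m : ℕ) : X →L[ℝ] X :=
  ContinuousLinearMap.id ℝ X - P m

/-- The linear equation `x_{m+1} = A_m x_m` admits a nonuniform (μ,ν)-dichotomy with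
projections `P`, and constants `a < 0 ≤ b`, `ε ≥ 0`, `D ≥ 1`. -/
structure Dichotomy {X : Type*} [NormedAddCommGroup X] [NormedSpace ℝ X]
    (A : ℕ → X ≃L[ℝ] X) (P : ℕ → X →L[ℝ] X)
    (μ ν : ℕ → ℝ) (a b ε D : ℝ) : Prop where
  ha : a < 0
  hb : 0 ≤ b
  hε : 0 ≤ ε
  hD : 1 ≤ D
  idem : ∀ m : ℕ, (P m).comp (P m) = P m
  comm : ∀ m n : ℕ, n ≤ m → (P m).comp (calA A m n) = (calA A m n).comp (P n)
  boundP : ∀ m n : ℕ, 1 ≤ n → n ≤ m →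
    ‖(calA A m n).comp (P n)‖ ≤ D * (μ m / μ (n - 1)) ^ a * ν (n - 1) ^ ε
  boundQ : ∀ m n : ℕ, 1 ≤ n → n ≤ m →
    ‖(calAinv A m n).comp (Qproj P m)‖ ≤ D * (μ (m - 1) / μ n) ^ (-b) * ν (m - 1) ^ ε

/-- The class 𝒫_{c,q} of admissible perturbations. -/
def IsPerturbation {X : Type*} [NormedAddCommGroup X] [NormedSpace ℝ X]
    (f : ℕ → X → X) (c q : ℝ) : Prop :=
  ∀ n : ℕ, f n 0 = 0 ∧ ∀ u v : X, ‖f n u - f n v‖ ≤ c * ‖u - v‖ * (‖u‖ + ‖v‖) ^ q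

/-- The sequence `β` of the stable manifold theorem. -/
noncomputable def betaSeq (μ ν : ℕ → ℝ) (a ε q : ℝ) (m : ℕ) : ℝ :=
  μ (m - 1) ^ a /
    (ν (m - 1) ^ (ε * (1 + 1 / q)) *
      (∑' k : {k : ℕ // m ≤ k}, μ k.1 ^ (a * q) * ν k.1 ^ ε) ^ (1 / q))

/-- Membership in 𝒳_{δ,β}: a sequence of continuous maps `φ n : B_n(δ β_n) → F_n`
vanishing at `0` and Lipschitz with constant `1`.  (Here `E n` is the range of `P n`,
identified with the fixed-point set of `P n`, and `F n = ker (P n)`.) -/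
def MemX {X : Type*} [NormedAddCommGroup X] [NormedSpace ℝ X]
    (P : ℕ → X →L[ℝ] X) (δ : ℝ) (β : ℕ → ℝ) (φ : ℕ → X → X) : Prop :=
  ∀ n : ℕ, 1 ≤ n →
    φ n 0 = 0 ∧
    (∀ ξ : X, P n ξ = ξ → ‖ξ‖ < δ * β n → P n (φ n ξ) = 0) ∧
    (∀ ξ ξ' : X, P n ξ = ξ → P n ξ' = ξ' → ‖ξ‖ < δ * β n → ‖ξ'‖ < δ * β n →
      ‖φ n ξ - φ n ξ'‖ ≤ ‖ξ - ξ'‖) ∧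
    ContinuousOn (φ n) {ξ : X | P n ξ = ξ ∧ ‖ξ‖ < δ * β n}

/-- Membership in 𝒳*_{δ,β}: maps `φ n : E n → F n` restricting on the balls to an element
of 𝒳_{δ,β} and radially extended outside the balls. -/
def MemXstar {X : Type*} [NormedAddCommGroup X] [NormedSpace ℝ X]
    (P : ℕ → X →L[ℝ] X) (δ : ℝ) (β : ℕ → ℝ) (φ : ℕ → X → X) : Prop :=
  MemX P δ β φ ∧
    ∀ n : ℕ, 1 ≤ n → ∀ ξ : X, P n ξ = ξ →
      P n (φ n ξ) = 0 ∧ (¬ ‖ξ‖ < δ * β n → φ n ξ = φ n ((δ * β n / ‖ξ‖) • ξ))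

/-- Membership in ℬ_{n,δ,β}. -/
def MemB {X : Type*} [NormedAddCommGroup X] [NormedSpace ℝ X]
    (P : ℕ → X →L[ℝ] X) (μ ν : ℕ → ℝ) (a ε C δ : ℝ) (β : ℕ → ℝ)
    (n : ℕ) (x : ℕ → X → X) : Prop :=
  (∀ ξ : X, P n ξ = ξ → ‖ξ‖ < δ * β n → x n ξ = ξ) ∧
  (∀ m : ℕ, n ≤ m → x m 0 = 0) ∧
  (∀ m : ℕ, n ≤ m → ∀ ξ : X, P n ξ = ξ → ‖ξ‖ < δ * β n → P m (x m ξ) = x m ξ) ∧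
  (∀ m : ℕ, n ≤ m → ∀ ξ ξ' : X, P n ξ = ξ → P n ξ' = ξ' →
    ‖ξ‖ < δ * β n → ‖ξ'‖ < δ * β n →
    ‖x m ξ - x m ξ'‖ ≤ C * (μ m / μ (n - 1)) ^ a * ν (n - 1) ^ ε * ‖ξ - ξ'‖)

/-- The metric `‖φ − ψ‖′` on 𝒳_{δ,β}. -/
noncomputable def distX {X : Type*} [NormedAddCommGroup X] [NormedSpace ℝ X]
    (P : ℕ → X →L[ℝ] X) (δ : ℝ) (β : ℕ → ℝ) (φ ψ : ℕ → X → X) : ℝ :=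
  sSup {r : ℝ | ∃ n : ℕ, 1 ≤ n ∧ ∃ ξ : X, P n ξ = ξ ∧ ‖ξ‖ < δ * β n ∧ ξ ≠ 0 ∧
    r = ‖φ n ξ - ψ n ξ‖ / ‖ξ‖}

/-- The metric `‖x − y‖″` on ℬ_{n,δ,β}. -/
noncomputable def distB {X : Type*} [NormedAddCommGroup X] [NormedSpace ℝ X]
    (P : ℕ → X →L[ℝ] X) (μ ν : ℕ → ℝ) (a ε δ : ℝ) (β : ℕ → ℝ)
    (n : ℕ) (x y : ℕ → X → X) : ℝ :=
  sSup {r : ℝ | ∃ m : ℕ, n ≤ m ∧ ∃ ξ : X, P n ξ = ξ ∧ ‖ξ‖ < δ * β n ∧ ξ ≠ 0 ∧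
    r = ‖x m ξ - y m ξ‖ / ‖ξ‖ * (μ m / μ (n - 1)) ^ (-a) * ν (n - 1) ^ (-ε)}

/-- `x` solves the fixed point equation (eq:dyn-split2a) for `φ` at base time `n`:
`x m ξ = 𝒜_{m,n} ξ + ∑_{k=n}^{m-1} 𝒜_{m,k+1} P_{k+1} f_k (x_k ξ + φ_k (x_k ξ))`. -/
def SolvesEq {X : Type*} [NormedAddCommGroup X] [NormedSpace ℝ X]
    (A : ℕ → X ≃L[ℝ] X) (P : ℕ → X →L[ℝ] X) (f : ℕ → X → X)
    (δ : ℝ) (β : ℕ → ℝ) (n : ℕ) (φ : ℕ → X → X) (x : ℕ → X → X) : Prop :=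
  ∀ m : ℕ, n ≤ m → ∀ ξ : X, P n ξ = ξ → ‖ξ‖ < δ * β n →
    x m ξ = calA A m n ξ +
      ∑ k ∈ Finset.Ico n m, calA A m (k + 1) (P (k + 1) (f k (x k ξ + φ k (x k ξ))))

/-- The perturbed dynamics `ℱ_{m,n} = (A_{m-1} + f_{m-1}) ∘ ⋯ ∘ (A_n + f_n)`. -/
def calF {X : Type*} [NormedAddCommGroup X] [NormedSpace ℝ X]
    (A : ℕ → X ≃L[ℝ] X) (f : ℕ → X → X) (m n : ℕ) : X → X :=
  (List.range (m - n)).foldl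
    (fun g k => (fun y : X => A (n + k) y + f (n + k) y) ∘ g) id

/-- The metric `‖f − g‖‴` on 𝒫_{c,q}. -/
noncomputable def distP {X : Type*} [NormedAddCommGroup X] [NormedSpace ℝ X]
    (f g : ℕ → X → X) (q : ℝ) : ℝ :=
  sSup {r : ℝ | ∃ n : ℕ, 1 ≤ n ∧ ∃ u : X, u ≠ 0 ∧ r = ‖f n u - g n u‖ / ‖u‖ ^ (q + 1)}

section Aux
variable {X : Type*} [NormedAddCommGroup X] [NormedSpace ℝ X] (A : ℕ → X ≃L[ℝ] X)

lemma calA_self (n : ℕ) : calA A n n = ContinuousLinearMap.id ℝ X := by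
  simp [calA]

lemma calA_succ {m n : ℕ} (h : n ≤ m) :
    calA A (m+1) n = ((A m : X →L[ℝ] X)).comp (calA A m n) := by
  unfold calA
  rw [show m + 1 - n = (m - n) + 1 by omega, List.range_succ, List.foldl_append]
  simp only [List.foldl_cons, List.foldl_nil]
  rw [show n + (m - n) = m by omega]

lemma calAinv_self (n : ℕ) : calAinv A n n = ContinuousLinearMap.id ℝ X := by
  simp [calAinv]

lemma calAinv_succ {m n : ℕ} (h : n ≤ m) :
    calAinv A (m+1) n = (calAinv A m n).comp ((A m).symm : X →L[ℝ] X) := by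
  unfold calAinv
  rw [show m + 1 - n = (m - n) + 1 by omega, List.range_succ, List.foldl_append]
  simp only [List.foldl_cons, List.foldl_nil]
  rw [show n + (m - n) = m by omega]

lemma calA_comp {n m k : ℕ} (hnm : n ≤ m) (hmk : m ≤ k) :
    (calA A k m).comp (calA A m n) = calA A k n := by
  induction k, hmk using Nat.le_induction with
  | base => rw [calA_self]; exact (calA A m n).id_comp
  | succ k hk ih =>
      rw [calA_succ A hk, calA_succ A (hnm.trans hk), ContinuousLinearMap.comp_assoc, ih]

lemma calAinv_cons {n m : ℕ} (h : n < m) (y : X) :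
    A n (calAinv A m n y) = calAinv A m (n+1) y := by
  induction m, h using Nat.le_induction generalizing y with
  | base =>
      rw [calAinv_succ A (le_refl n), calAinv_self, calAinv_self]
      simp
  | succ m hm ih =>
      rw [calAinv_succ A (by omega : n ≤ m), calAinv_succ A (by omega : n + 1 ≤ m)]
      simpa using ih ((A m).symm y)

end Aux

/-- Lemma 2, part 2, of the paper. -/
theorem invariance_of_phi_eq_neg_series
    {X : Type*} [NormedAddCommGroup X] [NormedSpace ℝ X] [CompleteSpace X]
    (A : ℕ → X ≃L[ℝ] X) (P : ℕ → X →L[ℝ] X) (μ ν : ℕ → ℝ)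
    (a b ε D c q C K : ℝ) (f : ℕ → X → X)
    (hμ : GrowthRate μ) (hν : GrowthRate ν)
    (hdich : Dichotomy A P μ ν a b ε D)
    (hc : 0 < c) (hq : 1 < q) (hf : IsPerturbation f c q)
    (hsum : Summable (fun k : ℕ => μ k ^ (a * q) * ν k ^ ε))
    (hK : 1 ≤ K)
    (hdec : ∀ m n : ℕ, 1 ≤ n → n ≤ m →
      μ m ^ a * (betaSeq μ ν a ε q m)⁻¹ / (μ (n - 1) ^ a * (betaSeq μ ν a ε q n)⁻¹) ≤ K)
    (hC : D < C) :
    ∃ δ₀ : ℝ, 0 < δ₀ ∧ ∀ δ : ℝ, 0 < δ → δ ≤ δ₀ →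
      ∀ φ : ℕ → X → X, MemXstar P δ (betaSeq μ ν a ε q) φ →
      ∀ x : ℕ → ℕ → X → X,
        (∀ n : ℕ, 1 ≤ n → MemB P μ ν a ε C δ (betaSeq μ ν a ε q) n (x n) ∧
          SolvesEq A P f δ (betaSeq μ ν a ε q) n φ (x n) ∧
          (∀ y : ℕ → X → X, MemB P μ ν a ε C δ (betaSeq μ ν a ε q) n y →
            SolvesEq A P f δ (betaSeq μ ν a ε q) n φ y →
            ∀ m : ℕ, n ≤ m → ∀ ξ : X, P n ξ = ξ → ‖ξ‖ < δ * betaSeq μ ν a ε q n →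
              y m ξ = x n m ξ)) →
        (∀ n : ℕ, 1 ≤ n → ∀ ξ : X, P n ξ = ξ → ‖ξ‖ < δ * betaSeq μ ν a ε q n →
          φ n ξ = -∑' j : ℕ,
            calAinv A (n + j + 1) n
              (Qproj P (n + j + 1)
                (f (n + j) (x n (n + j) ξ + φ (n + j) (x n (n + j) ξ))))) →
        ∀ n : ℕ, 1 ≤ n → ∀ m : ℕ, n ≤ m → ∀ ξ : X, P n ξ = ξ →
          ‖ξ‖ < δ * (betaSeq μ ν a ε q n * ν (n - 1) ^ (-ε)) / (C * K) →
          φ m (x n m ξ) = calA A m n (φ n ξ) +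
            ∑ k ∈ Finset.Ico n m,
              calA A m (k + 1) (Qproj P (k + 1) (f k (x n k ξ + φ k (x n k ξ)))) := by
  classical
  -- basic positivity facts
  have hμ1 : ∀ k, (1:ℝ) ≤ μ k := fun k => hμ.one_le.trans (hμ.mono.monotone (Nat.zero_le k))
  have hν1 : ∀ k, (1:ℝ) ≤ ν k := fun k => hν.one_le.trans (hν.mono.monotone (Nat.zero_le k))
  have hμ0 : ∀ k, (0:ℝ) < μ k := fun k => lt_of_lt_of_le one_pos (hμ1 k)
  have hν0 : ∀ k, (0:ℝ) < ν k := fun k => lt_of_lt_of_le one_pos (hν1 k)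
  have hD1 : (1:ℝ) ≤ D := hdich.hD
  have hCpos : (0:ℝ) < C := lt_trans (lt_of_lt_of_le one_pos hD1) hC
  have hKpos : (0:ℝ) < K := lt_of_lt_of_le one_pos hK
  have hβpos : ∀ k : ℕ, 0 < betaSeq μ ν a ε q k := by
    intro k
    have hs : Summable (fun j : {j : ℕ // k ≤ j} => μ j.1 ^ (a*q) * ν j.1 ^ ε) :=
      hsum.subtype _
    have hpos : 0 < ∑' j : {j : ℕ // k ≤ j}, μ j.1 ^ (a*q) * ν j.1 ^ ε := by
      refine Summable.tsum_pos hs (fun j => ?_) ⟨k, le_refl k⟩ ?_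
      · exact (mul_pos (Real.rpow_pos_of_pos (hμ0 _) _) (Real.rpow_pos_of_pos (hν0 _) _)).le
      · exact mul_pos (Real.rpow_pos_of_pos (hμ0 _) _) (Real.rpow_pos_of_pos (hν0 _) _)
    exact div_pos (Real.rpow_pos_of_pos (hμ0 _) _)
      (mul_pos (Real.rpow_pos_of_pos (hν0 _) _) (Real.rpow_pos_of_pos hpos _))
  -- consequence of hdec
  have hβk : ∀ n' k : ℕ, 1 ≤ n' → n' ≤ k →
      (μ k / μ (n'-1)) ^ a * betaSeq μ ν a ε q n' ≤ K * betaSeq μ ν a ε q k := by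
    intro n' k h1 h2
    have h := hdec k n' h1 h2
    have hβn := hβpos n'
    have hβk' := hβpos k
    have hμa : (0:ℝ) < μ (n'-1) ^ a := Real.rpow_pos_of_pos (hμ0 _) _
    have hμka : (0:ℝ) < μ k ^ a := Real.rpow_pos_of_pos (hμ0 _) _
    rw [div_le_iff₀ (by positivity)] at h
    rw [Real.div_rpow (hμ0 k).le (hμ0 (n'-1)).le]
    rw [div_mul_eq_mul_div, div_le_iff₀ hμa]
    have h2' := mul_le_mul_of_nonneg_right h (mul_pos hβn hβk').le
    calc μ k ^ a * betaSeq μ ν a ε q n'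
        = μ k ^ a * (betaSeq μ ν a ε q k)⁻¹ * (betaSeq μ ν a ε q n' * betaSeq μ ν a ε q k) := by
          field_simp
      _ ≤ K * (μ (n'-1) ^ a * (betaSeq μ ν a ε q n')⁻¹) * (betaSeq μ ν a ε q n' * betaSeq μ ν a ε q k) := h2'
      _ = K * betaSeq μ ν a ε q k * μ (n'-1) ^ a := by field_simp
  refine ⟨1, one_pos, ?_⟩
  intro δ hδ _ φ hφ x hx hphi n hn m hm ξ hPξ hξ
  set β := betaSeq μ ν a ε q with hβdef
  have hνε1 : ∀ k, ν k ^ (-ε) ≤ 1 := fun k =>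
    Real.rpow_le_one_of_one_le_of_nonpos (hν1 k) (neg_nonpos.mpr hdich.hε)
  have hμa1 : ∀ k, μ k ^ a ≤ 1 := fun k =>
    Real.rpow_le_one_of_one_le_of_nonpos (hμ1 k) hdich.ha.le
  -- ξ is in the ball
  have hξball : ‖ξ‖ < δ * β n := by
    have hCK1 : (1:ℝ) ≤ C * K := one_le_mul_of_one_le_of_one_le (le_of_lt (lt_of_le_of_lt hD1 hC)) hK
    have h1 : δ * (β n * ν (n-1) ^ (-ε)) / (C * K) ≤ δ * (β n * ν (n-1) ^ (-ε)) :=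
      div_le_self (mul_nonneg hδ.le (mul_nonneg (hβpos n).le (Real.rpow_nonneg (hν0 _).le _))) hCK1
    refine hξ.trans_le (h1.trans ?_)
    have h2 := hνε1 (n-1)
    nlinarith [mul_nonneg (mul_pos hδ (hβpos n)).le (sub_nonneg.mpr h2)]
  obtain ⟨hB1, hB2, hB3, hB4⟩ := (hx n hn).1
  have h0ball : ‖(0:X)‖ < δ * β n := by
    rw [norm_zero]; exact mul_pos hδ (hβpos n)
  -- norm bound along the orbit
  have hxnorm : ∀ k, n ≤ k → ‖x n k ξ‖ ≤ C * (μ k / μ (n-1)) ^ a * ν (n-1) ^ ε * ‖ξ‖ := by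
    intro k hk
    have := hB4 k hk ξ 0 hPξ (map_zero _) hξball h0ball
    rwa [hB2 k hk, sub_zero, sub_zero] at this
  -- the orbit stays in the balls
  have hxball : ∀ k, n ≤ k → ‖x n k ξ‖ < δ * β k := by
    intro k hk
    have hLpos : 0 < C * (μ k / μ (n-1)) ^ a * ν (n-1) ^ ε :=
      mul_pos (mul_pos hCpos (Real.rpow_pos_of_pos (div_pos (hμ0 _) (hμ0 _)) _))
        (Real.rpow_pos_of_pos (hν0 _) _)
    have h1 : ‖x n k ξ‖ < C * (μ k / μ (n-1)) ^ a * ν (n-1) ^ ε *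
        (δ * (β n * ν (n-1) ^ (-ε)) / (C * K)) :=
      lt_of_le_of_lt (hxnorm k hk) (mul_lt_mul_of_pos_left hξ hLpos)
    have hid : C * (μ k / μ (n-1)) ^ a * ν (n-1) ^ ε *
        (δ * (β n * ν (n-1) ^ (-ε)) / (C * K))
        = δ * ((μ k / μ (n-1)) ^ a * β n) / K := by
      rw [Real.rpow_neg (hν0 (n-1)).le]
      have hνne : ν (n-1) ^ ε ≠ 0 := (Real.rpow_pos_of_pos (hν0 _) _).ne'
      field_simp
    rw [hid] at h1
    refine h1.trans_le ?_
    rw [div_le_iff₀ hKpos]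
    have := hβk n k hn hk
    nlinarith [hδ.le]
  have hPx : ∀ k, n ≤ k → P k (x n k ξ) = x n k ξ := fun k hk => hB3 k hk ξ hPξ hξball
  -- Lipschitz bound for φ
  have hφnorm : ∀ k, n ≤ k → ‖φ k (x n k ξ)‖ ≤ ‖x n k ξ‖ := by
    intro k hk
    obtain ⟨hφ0, _, hφlip, _⟩ := hφ.1 k (hn.trans hk)
    have h0k : ‖(0:X)‖ < δ * β k := by
      rw [norm_zero]; exact mul_pos hδ (hβpos k)
    have := hφlip (x n k ξ) 0 (hPx k hk) (map_zero _) (hxball k hk) h0k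
    simpa [hφ0] using this
  -- the nonlinear term along the orbit
  set g : ℕ → X := fun k => Qproj P (k+1) (f k (x n k ξ + φ k (x n k ξ))) with hgdef
  -- shifted fixed-point relation
  have hshift : ∀ m', n ≤ m' → ∀ k, m' ≤ k →
      x n k ξ = calA A k m' (x n m' ξ) +
        ∑ j ∈ Finset.Ico m' k, calA A k (j+1) (P (j+1) (f j (x n j ξ + φ j (x n j ξ)))) := by
    intro m' hm' k hk
    have hsol := (hx n hn).2.1
    have e1 := hsol k (hm'.trans hk) ξ hPξ hξball
    have e2 := hsol m' hm' ξ hPξ hξball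
    have key : ∀ r, r ≤ m' → ∀ v : X, calA A k m' (calA A m' r v) = calA A k r v := by
      intro r hr v
      have := DFunLike.congr_fun (calA_comp A hr hk) v
      simpa using this
    rw [e1, e2, map_add, map_sum, key n hm' ξ]
    rw [Finset.sum_congr rfl (fun j hj => key (j+1)
      (by rcases Finset.mem_Ico.mp hj with ⟨_, h⟩; omega) _)]
    rw [add_assoc, Finset.sum_Ico_consecutive _ hm' hk]
  -- flow property
  have hflow : ∀ m', n ≤ m' → ∀ k, m' ≤ k → x m' k (x n m' ξ) = x n k ξ := by
    intro m' hm'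
    have hm'1 : 1 ≤ m' := hn.trans hm'
    obtain ⟨hB1', hB2', hB3', hB4'⟩ := (hx m' hm'1).1
    have hsol := (hx m' hm'1).2.1
    have hPη : P m' (x n m' ξ) = x n m' ξ := hPx m' hm'
    have hηball : ‖x n m' ξ‖ < δ * β m' := hxball m' hm'
    intro k
    induction k using Nat.strong_induction_on with
    | _ k ih =>
      intro hk
      have e1 := hsol k hk (x n m' ξ) hPη hηball
      have e2 := hshift m' hm' k hk
      rw [e1, e2]
      congr 1
      refine Finset.sum_congr rfl fun j hj => ?_
      rcases Finset.mem_Ico.mp hj with ⟨hj1, hj2⟩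
      rw [ih j hj2 hj1]
  -- summability of the tail series
  have hgsummable : ∀ m', n ≤ m' →
      Summable (fun j : ℕ => calAinv A (m'+j+1) m' (g (m'+j))) := by
    intro m' hm'
    have hm'1 : 1 ≤ m' := hn.trans hm'
    set R : ℝ := C * ν (n-1) ^ ε * ‖ξ‖ / μ (n-1) ^ a with hRdef
    have hR0 : 0 ≤ R := by
      have := Real.rpow_pos_of_pos (hμ0 (n-1)) a
      have := Real.rpow_pos_of_pos (hν0 (n-1)) ε
      positivity
    have hq0 : (0:ℝ) ≤ q := by linarith
    refine Summable.of_norm_bounded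
      (g := fun j => (D * (c * (2*R) * (2*R)^q)) * (μ (m'+j) ^ (a*q) * ν (m'+j) ^ ε)) ?_ ?_
    · apply Summable.mul_left
      have h := (summable_nat_add_iff (f := fun k : ℕ => μ k ^ (a*q) * ν k ^ ε) m').mpr hsum
      have he : (fun j : ℕ => μ (m'+j) ^ (a*q) * ν (m'+j) ^ ε)
          = (fun j : ℕ => μ (j+m') ^ (a*q) * ν (j+m') ^ ε) := by
        funext j; rw [add_comm]
      rw [he]; exact h
    · intro j
      set k := m' + j with hkdef
      have hkn : n ≤ k := le_trans hm' (Nat.le_add_right _ _)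
      set u : X := x n k ξ + φ k (x n k ξ) with hudef
      have hu : ‖u‖ ≤ 2 * R * μ k ^ a := by
        have h1 := hxnorm k hkn
        have h2 := hφnorm k hkn
        have h3 : C * (μ k / μ (n-1)) ^ a * ν (n-1) ^ ε * ‖ξ‖ = R * μ k ^ a := by
          rw [Real.div_rpow (hμ0 k).le (hμ0 (n-1)).le, hRdef]
          have : μ (n-1) ^ a ≠ 0 := (Real.rpow_pos_of_pos (hμ0 _) _).ne'
          field_simp
        calc ‖u‖ ≤ ‖x n k ξ‖ + ‖φ k (x n k ξ)‖ := norm_add_le _ _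
          _ ≤ ‖x n k ξ‖ + ‖x n k ξ‖ := by linarith
          _ ≤ 2 * (R * μ k ^ a) := by rw [← h3]; linarith
          _ = 2 * R * μ k ^ a := by ring
      have hμka : (0:ℝ) ≤ μ k ^ a := (Real.rpow_pos_of_pos (hμ0 k) a).le
      have hv : ‖f k u‖ ≤ c * ‖u‖ * ‖u‖ ^ q := by
        have := (hf k).2 u 0
        simpa [(hf k).1] using this
      have hop : ‖(calAinv A (k+1) m').comp (Qproj P (k+1))‖
          ≤ D * (μ k / μ m') ^ (-b) * ν k ^ ε := by
        have := hdich.boundQ (k+1) m' hm'1 (by omega)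
        simpa using this
      have hγ1 : (μ k / μ m') ^ (-b) ≤ 1 := by
        refine Real.rpow_le_one_of_one_le_of_nonpos ?_ (neg_nonpos.mpr hdich.hb)
        rw [le_div_iff₀ (hμ0 m')]
        simpa using hμ.mono.monotone (by omega : m' ≤ k)
      have hγ0 : (0:ℝ) ≤ (μ k / μ m') ^ (-b) :=
        (Real.rpow_pos_of_pos (div_pos (hμ0 _) (hμ0 _)) _).le
      have hν0' : (0:ℝ) ≤ ν k ^ ε := (Real.rpow_pos_of_pos (hν0 k) ε).le
      have huq : ‖u‖ ^ q ≤ (2*R) ^ q * μ k ^ (a*q) := by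
        have h1 : ‖u‖ ^ q ≤ (2 * R * μ k ^ a) ^ q :=
          Real.rpow_le_rpow (norm_nonneg u) hu hq0
        rwa [Real.mul_rpow (by positivity) hμka, ← Real.rpow_mul (hμ0 k).le] at h1
      have hu1 : ‖u‖ ≤ 2 * R := by
        have := mul_le_mul_of_nonneg_left (hμa1 k) (by positivity : (0:ℝ) ≤ 2*R)
        calc ‖u‖ ≤ 2 * R * μ k ^ a := hu
          _ ≤ 2 * R * 1 := this
          _ = 2 * R := by ring
      have happ : calAinv A (k+1) m' (g k)
          = ((calAinv A (k+1) m').comp (Qproj P (k+1))) (f k u) := rfl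
      have hDν : (0:ℝ) ≤ D * (μ k / μ m') ^ (-b) * ν k ^ ε := by positivity
      calc ‖calAinv A (k+1) m' (g k)‖
          ≤ ‖(calAinv A (k+1) m').comp (Qproj P (k+1))‖ * ‖f k u‖ := by
            rw [happ]; exact ContinuousLinearMap.le_opNorm _ _
        _ ≤ (D * (μ k / μ m') ^ (-b) * ν k ^ ε) * (c * ‖u‖ * ‖u‖ ^ q) := by
            refine mul_le_mul hop hv (norm_nonneg _) hDν
        _ ≤ (D * 1 * ν k ^ ε) * (c * (2*R) * ((2*R) ^ q * μ k ^ (a*q))) := by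
            have h1 : (0:ℝ) ≤ ‖u‖ ^ q := Real.rpow_nonneg (norm_nonneg u) q
            have hμaq : (0:ℝ) ≤ μ k ^ (a*q) := (Real.rpow_pos_of_pos (hμ0 k) _).le
            have hD0 : (0:ℝ) ≤ D := by linarith
            gcongr
        _ = (D * (c * (2*R) * (2*R)^q)) * (μ k ^ (a*q) * ν k ^ ε) := by ring
  -- the one-step identity for φ along the orbit
  have hstep : ∀ m', n ≤ m' →
      φ (m'+1) (x n (m'+1) ξ) = A m' (φ m' (x n m' ξ)) + g m' := by
    intro m' hm'
    have hm'1 : 1 ≤ m' := hn.trans hm'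
    have h1 : φ m' (x n m' ξ) = -∑' j : ℕ, calAinv A (m'+j+1) m' (g (m'+j)) := by
      rw [hphi m' hm'1 (x n m' ξ) (hPx m' hm') (hxball m' hm')]
      congr 1
      exact tsum_congr fun j => by rw [hflow m' hm' (m'+j) (Nat.le_add_right _ _)]
    have h2 : φ (m'+1) (x n (m'+1) ξ)
        = -∑' j : ℕ, calAinv A (m'+1+j+1) (m'+1) (g (m'+1+j)) := by
      rw [hphi (m'+1) (by omega) (x n (m'+1) ξ) (hPx (m'+1) (by omega))
        (hxball (m'+1) (by omega))]
      congr 1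
      exact tsum_congr fun j => by rw [hflow (m'+1) (by omega) (m'+1+j) (Nat.le_add_right _ _)]
    have hF := hgsummable m' hm'
    have hmap : ∀ j, A m' (calAinv A (m'+j+1) m' (g (m'+j)))
        = calAinv A (m'+j+1) (m'+1) (g (m'+j)) :=
      fun j => calAinv_cons A (by omega) _
    have hFA : Summable (fun j : ℕ => calAinv A (m'+j+1) (m'+1) (g (m'+j))) := by
      have hcont : Continuous (A m' : X →L[ℝ] X) := (A m' : X →L[ℝ] X).continuous
      have h := hF.map ((A m' : X →L[ℝ] X) : X →+ X) hcont
      exact h.congr fun j => hmap j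
    have hmapts : A m' (∑' j : ℕ, calAinv A (m'+j+1) m' (g (m'+j)))
        = ∑' j : ℕ, calAinv A (m'+j+1) (m'+1) (g (m'+j)) := by
      rw [show (A m' : X → X) = ((A m' : X →L[ℝ] X) : X → X) from rfl]
      rw [(A m' : X →L[ℝ] X).map_tsum hF]
      exact tsum_congr hmap
    have hzero : ∑' j : ℕ, calAinv A (m'+j+1) (m'+1) (g (m'+j))
        = g m' + ∑' j : ℕ, calAinv A (m'+j+1+1) (m'+1) (g (m'+j+1)) := by
      rw [Summable.tsum_eq_zero_add hFA]
      congr 1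
      have : calAinv A (m'+0+1) (m'+1) (g (m'+0)) = g m' := by
        simp [calAinv_self]
      rw [this]
    have hre : (∑' j : ℕ, calAinv A (m'+1+j+1) (m'+1) (g (m'+1+j)))
        = ∑' j : ℕ, calAinv A (m'+j+1+1) (m'+1) (g (m'+j+1)) := by
      refine tsum_congr fun j => ?_
      rw [Nat.add_right_comm m' 1 j]
    rw [h1, h2, map_neg, hmapts, hzero, hre]
    abel
  -- final induction on m
  induction m, hm using Nat.le_induction with
  | base =>
    have hxnn : x n n ξ = ξ := hB1 ξ hPξ hξball
    rw [hxnn, calA_self, Finset.Ico_self, Finset.sum_empty, add_zero]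
    rfl
  | succ m hm ih =>
    have hsum1 : ∑ k ∈ Finset.Ico n m,
        calA A (m+1) (k+1) (Qproj P (k+1) (f k (x n k ξ + φ k (x n k ξ))))
        = A m (∑ k ∈ Finset.Ico n m,
            calA A m (k+1) (Qproj P (k+1) (f k (x n k ξ + φ k (x n k ξ))))) := by
      rw [map_sum]
      refine Finset.sum_congr rfl fun k hk => ?_
      have hk' : k < m := (Finset.mem_Ico.mp hk).2
      rw [calA_succ A (by omega : k+1 ≤ m)]
      rfl
    rw [Finset.sum_Ico_succ_top hm, hsum1, calA_succ A hm, calA_self]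
    calc φ (m+1) (x n (m+1) ξ) = A m (φ m (x n m ξ)) + g m := hstep m hm
      _ = A m (calA A m n (φ n ξ) + ∑ k ∈ Finset.Ico n m,
            calA A m (k+1) (Qproj P (k+1) (f k (x n k ξ + φ k (x n k ξ))))) + g m := by
          rw [ih]
      _ = _ := by
          have e1 : (((A m : X →L[ℝ] X)).comp (calA A m n)) (φ n ξ)
              = A m (calA A m n (φ n ξ)) := rfl
          have e2 : (ContinuousLinearMap.id ℝ X)
              (Qproj P (m+1) (f m (x n m ξ + φ m (x n m ξ)))) = g m := rfl
          rw [map_add, e1, e2]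
          abel
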